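/- Let 0 < q < 1 and j ≥ 1. Then the conditional entropy of an i.i.d. Bernoulli(q) vector of length 2^j given odd parity satisfies the recursion H₁^j(q) = 1 + H₀^{j−1}(q) + H₁^{j−1}(q). -/

import Mathlib

open Finset

/-- Hamming weight of a binary string `e ∈ {0,1}^n`. -/
def wt {n : ℕ} (e : Fin n → Bool) : ℕ := (Finset.univ.filter fun i => e i = true).card

/-- i.i.d. Bernoulli(q) probability of the binary string `e ∈ {0,1}^n`. -/
noncomputable def Pq (q : ℝ) {n : ℕ} (e : Fin n → Bool) : ℝ :=
  q ^ wt e * (1 - q) ^ (n - wt e)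

/-- `p̄_j(q) = (1 − (1−2q)^{2^j})/2`. -/
noncomputable def pbar (q : ℝ) (j : ℕ) : ℝ := (1 - (1 - 2 * q) ^ (2 ^ j)) / 2

/-- `q̄_j(q) = p̄_{j−1}(q)²/(1 − p̄_j(q))`. -/
noncomputable def qbar (q : ℝ) (j : ℕ) : ℝ := (pbar q (j - 1)) ^ 2 / (1 - pbar q j)

/-- Binary entropy function (base 2), with `h(0) = h(1) = 0`. -/
noncomputable def binEnt (x : ℝ) : ℝ := -(x * Real.logb 2 x) - (1 - x) * Real.logb 2 (1 - x)

/-- `Π_b^j(q)`: probability that an i.i.d. Bernoulli(q) vector of length `2^j` has parity `b`. -/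
noncomputable def Pib (q : ℝ) (j : ℕ) (b : ℕ) : ℝ := if b = 1 then pbar q j else 1 - pbar q j

/-- `H_b^j(q)`: Shannon entropy (base 2) of an i.i.d. Bernoulli(q) vector of length `2^j`
conditioned on its parity being `b`. -/
noncomputable def Hcond (q : ℝ) (j : ℕ) (b : ℕ) : ℝ :=
  -∑ e ∈ Finset.univ.filter (fun e : Fin (2 ^ j) → Bool => wt e % 2 = b),
      (Pq q e / Pib q j b) * Real.logb 2 (Pq q e / Pib q j b)

/-- For `0 < q < 1` and `j ≥ 1`, the conditional entropy of an i.i.d. Bernoulli(q) vector of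
length `2^j` given odd parity satisfies `H₁^j(q) = 1 + H₀^{j−1}(q) + H₁^{j−1}(q)`. -/
lemma wt_eq_sum {n : ℕ} (e : Fin n → Bool) : wt e = ∑ i, (if e i then 1 else 0) := by
  rw [wt, Finset.card_filter]

lemma wt_le {n : ℕ} (e : Fin n → Bool) : wt e ≤ n :=
  le_trans (Finset.card_filter_le _ _) (by simp)

lemma Pq_pos {q : ℝ} (hq0 : 0 < q) (hq1 : q < 1) {n : ℕ} (e : Fin n → Bool) : 0 < Pq q e :=
  mul_pos (pow_pos hq0 _) (pow_pos (by linarith) _)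

lemma Pq_eq_prod (q : ℝ) {n : ℕ} (e : Fin n → Bool) :
    Pq q e = ∏ i, (if e i then q else 1 - q) := by
  classical
  rw [Finset.prod_ite, Finset.prod_const, Finset.prod_const, Pq]
  congr 2
  have h := Finset.card_filter_add_card_filter_not (s := (univ : Finset (Fin n)))
    (p := fun i => e i = true)
  simp only [Finset.card_univ, Fintype.card_fin] at h
  have : wt e = (univ.filter fun i => e i = true).card := rfl
  omega

lemma wt_cons {n : ℕ} (b : Bool) (e : Fin n → Bool) :
    wt (Fin.cons b e) = (if b then 1 else 0) + wt e := by
  rw [wt_eq_sum, Fin.sum_univ_succ, wt_eq_sum]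
  simp

lemma Pq_cons (q : ℝ) {n : ℕ} (b : Bool) (e : Fin n → Bool) :
    Pq q (Fin.cons b e) = (if b then q else 1 - q) * Pq q e := by
  rw [Pq_eq_prod, Fin.prod_univ_succ, Pq_eq_prod]
  simp

lemma sum_Pq (q : ℝ) (n : ℕ) : ∑ e : Fin n → Bool, Pq q e = 1 := by
  induction n with
  | zero =>
      rw [Fintype.sum_unique]
      simp [Pq, wt]
  | succ n ih =>
      rw [← Equiv.sum_comp (Fin.consEquiv (fun _ : Fin (n+1) => Bool)) (Pq q),
        Fintype.sum_prod_type, Fintype.sum_bool]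
      simp only [Fin.consEquiv, Equiv.coe_fn_mk, Pq_cons, if_true, if_false]
      rw [← Finset.mul_sum, ← Finset.mul_sum, ih]
      norm_num

lemma sum_sign (q : ℝ) (n : ℕ) :
    ∑ e : Fin n → Bool, (-1 : ℝ) ^ (wt e) * Pq q e = (1 - 2*q) ^ n := by
  induction n with
  | zero =>
      rw [Fintype.sum_unique]
      simp [Pq, wt]
  | succ n ih =>
      rw [← Equiv.sum_comp (Fin.consEquiv (fun _ : Fin (n+1) => Bool))
        (fun e => (-1 : ℝ) ^ (wt e) * Pq q e), Fintype.sum_prod_type, Fintype.sum_bool]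
      simp only [Fin.consEquiv, Equiv.coe_fn_mk, Pq_cons, wt_cons, Bool.false_eq_true,
        if_true, if_false, zero_add]
      have h1 : ∑ x : Fin n → Bool, (-1:ℝ) ^ (1 + wt x) * (q * Pq q x)
          = (-q) * ∑ x : Fin n → Bool, (-1:ℝ)^(wt x) * Pq q x := by
        rw [Finset.mul_sum]; refine Finset.sum_congr rfl fun x _ => ?_
        rw [pow_add]; ring
      have h0 : ∑ x : Fin n → Bool, (-1:ℝ) ^ (wt x) * ((1 - q) * Pq q x)
          = (1 - q) * ∑ x : Fin n → Bool, (-1:ℝ)^(wt x) * Pq q x := by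
        rw [Finset.mul_sum]; refine Finset.sum_congr rfl fun x _ => ?_
        ring
      rw [h1, h0, ih, pow_succ]
      ring

lemma sum_Pq_odd (q : ℝ) (n : ℕ) :
    ∑ e ∈ univ.filter (fun e : Fin n → Bool => wt e % 2 = 1), Pq q e
      = (1 - (1 - 2*q) ^ n) / 2 := by
  have hsplit : (∑ e ∈ univ.filter (fun e : Fin n → Bool => wt e % 2 = 1), Pq q e)
      + ∑ e ∈ univ.filter (fun e : Fin n → Bool => ¬ wt e % 2 = 1), Pq q e = 1 := by
    rw [Finset.sum_filter_add_sum_filter_not]; exact sum_Pq q n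
  have hsign : (∑ e ∈ univ.filter (fun e : Fin n → Bool => wt e % 2 = 1), Pq q e) * (-1)
      + ∑ e ∈ univ.filter (fun e : Fin n → Bool => ¬ wt e % 2 = 1), Pq q e
      = (1 - 2*q) ^ n := by
    rw [Finset.sum_mul]
    rw [← sum_sign q n, ← Finset.sum_filter_add_sum_filter_not univ
      (fun e : Fin n → Bool => wt e % 2 = 1) (fun e => (-1 : ℝ) ^ (wt e) * Pq q e)]
    congr 1
    · refine Finset.sum_congr rfl (fun e he => ?_)
      have : wt e % 2 = 1 := by simpa using (Finset.mem_filter.mp he).2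
      rw [Odd.neg_one_pow (Nat.odd_iff.mpr this)]; ring
    · refine Finset.sum_congr rfl (fun e he => ?_)
      have : ¬ wt e % 2 = 1 := by simpa using (Finset.mem_filter.mp he).2
      rw [Even.neg_one_pow (Nat.even_iff.mpr (by omega))]; ring
  linarith

lemma sum_Pq_even (q : ℝ) (n : ℕ) :
    ∑ e ∈ univ.filter (fun e : Fin n → Bool => wt e % 2 = 0), Pq q e
      = (1 + (1 - 2*q) ^ n) / 2 := by
  have hsplit : (∑ e ∈ univ.filter (fun e : Fin n → Bool => wt e % 2 = 1), Pq q e)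
      + ∑ e ∈ univ.filter (fun e : Fin n → Bool => ¬ wt e % 2 = 1), Pq q e = 1 := by
    rw [Finset.sum_filter_add_sum_filter_not]; exact sum_Pq q n
  have hodd := sum_Pq_odd q n
  have hcong : univ.filter (fun e : Fin n → Bool => ¬ wt e % 2 = 1)
      = univ.filter (fun e : Fin n → Bool => wt e % 2 = 0) := by
    refine Finset.filter_congr (fun e _ => ?_)
    constructor <;> intro h <;> omega
  rw [hcong] at hsplit
  linarith

def join {m n : ℕ} (f : Fin m → Bool) (g : Fin n → Bool) : Fin (m + n) → Bool :=
  fun i => Sum.elim f g (finSumFinEquiv.symm i)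

lemma wt_join {m n : ℕ} (f : Fin m → Bool) (g : Fin n → Bool) :
    wt (join f g) = wt f + wt g := by
  rw [wt_eq_sum, ← Equiv.sum_comp finSumFinEquiv (fun i => if join f g i then 1 else 0)]
  have : ∀ s : Fin m ⊕ Fin n, join f g (finSumFinEquiv s) = Sum.elim f g s := by
    intro s; unfold join; rw [Equiv.symm_apply_apply]
  rw [Finset.sum_congr rfl (fun s _ => by rw [this s])]
  rw [Fintype.sum_sum_type]
  simp only [Sum.elim_inl, Sum.elim_inr, wt_eq_sum]
  rfl

lemma Pq_join (q : ℝ) {m n : ℕ} (f : Fin m → Bool) (g : Fin n → Bool) :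
    Pq q (join f g) = Pq q f * Pq q g := by
  rw [Pq_eq_prod, ← Equiv.prod_comp finSumFinEquiv (fun i => if join f g i then q else 1 - q)]
  have : ∀ s : Fin m ⊕ Fin n, join f g (finSumFinEquiv s) = Sum.elim f g s := by
    intro s; unfold join; rw [Equiv.symm_apply_apply]
  rw [Finset.prod_congr rfl (fun s _ => by rw [this s])]
  rw [Fintype.prod_sum_type]
  simp only [Sum.elim_inl, Sum.elim_inr, Pq_eq_prod]
  rfl

def joinEquiv (m n : ℕ) : ((Fin m → Bool) × (Fin n → Bool)) ≃ (Fin (m + n) → Bool) :=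
  (Equiv.sumArrowEquivProdArrow _ _ _).symm.trans
    (Equiv.arrowCongr finSumFinEquiv (Equiv.refl Bool))

lemma joinEquiv_apply {m n : ℕ} (pr : (Fin m → Bool) × (Fin n → Bool)) :
    joinEquiv m n pr = join pr.1 pr.2 := by
  funext i
  simp [joinEquiv, join, Equiv.sumArrowEquivProdArrow, Equiv.arrowCongr]

lemma sum_div_logb {α : Type*} [DecidableEq α] (s : Finset α) (P : α → ℝ)
    (hP : ∀ e ∈ s, 0 < P e) (c : ℝ) (hc : 0 < c) :
    ∑ e ∈ s, (P e / c) * Real.logb 2 (P e / c)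
      = (∑ e ∈ s, P e * Real.logb 2 (P e)) / c
        - (∑ e ∈ s, P e) / c * Real.logb 2 c := by
  rw [Finset.sum_div, Finset.sum_div, Finset.sum_mul, ← Finset.sum_sub_distrib]
  refine Finset.sum_congr rfl fun e he => ?_
  rw [Real.logb_div (ne_of_gt (hP e he)) (ne_of_gt hc)]
  ring

lemma double_sum_eq {M N : ℕ} (q : ℝ) (hq0 : 0 < q) (hq1 : q < 1)
    (s : Finset (Fin M → Bool)) (t : Finset (Fin N → Bool)) :
    ∑ f ∈ s, ∑ g ∈ t, (Pq q f * Pq q g) * Real.logb 2 (Pq q f * Pq q g)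
      = (∑ f ∈ s, Pq q f * Real.logb 2 (Pq q f)) * (∑ g ∈ t, Pq q g)
        + (∑ f ∈ s, Pq q f) * (∑ g ∈ t, Pq q g * Real.logb 2 (Pq q g)) := by
  rw [Finset.sum_mul_sum, Finset.sum_mul_sum, ← Finset.sum_add_distrib]
  refine Finset.sum_congr rfl fun f _ => ?_
  rw [← Finset.sum_add_distrib]
  refine Finset.sum_congr rfl fun g _ => ?_
  rw [Real.logb_mul (ne_of_gt (Pq_pos hq0 hq1 f)) (ne_of_gt (Pq_pos hq0 hq1 g))]
  ring

lemma T1_eq (q : ℝ) (hq0 : 0 < q) (hq1 : q < 1) (M : ℕ) :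
    ∑ e ∈ univ.filter (fun e : Fin (M + M) → Bool => wt e % 2 = 1),
        Pq q e * Real.logb 2 (Pq q e)
      = ((∑ f ∈ univ.filter (fun f : Fin M → Bool => wt f % 2 = 0),
            Pq q f * Real.logb 2 (Pq q f))
          * (∑ g ∈ univ.filter (fun g : Fin M → Bool => wt g % 2 = 1), Pq q g)
        + (∑ f ∈ univ.filter (fun f : Fin M → Bool => wt f % 2 = 0), Pq q f)
          * (∑ g ∈ univ.filter (fun g : Fin M → Bool => wt g % 2 = 1),
              Pq q g * Real.logb 2 (Pq q g)))
      + ((∑ f ∈ univ.filter (fun f : Fin M → Bool => wt f % 2 = 1),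
            Pq q f * Real.logb 2 (Pq q f))
          * (∑ g ∈ univ.filter (fun g : Fin M → Bool => wt g % 2 = 0), Pq q g)
        + (∑ f ∈ univ.filter (fun f : Fin M → Bool => wt f % 2 = 1), Pq q f)
          * (∑ g ∈ univ.filter (fun g : Fin M → Bool => wt g % 2 = 0),
              Pq q g * Real.logb 2 (Pq q g))) := by
  have htrans : ∑ e ∈ univ.filter (fun e : Fin (M + M) → Bool => wt e % 2 = 1),
        Pq q e * Real.logb 2 (Pq q e)
      = ∑ pr ∈ univ.filter
            (fun pr : (Fin M → Bool) × (Fin M → Bool) => (wt pr.1 + wt pr.2) % 2 = 1),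
          (Pq q pr.1 * Pq q pr.2) * Real.logb 2 (Pq q pr.1 * Pq q pr.2) := by
    refine (Finset.sum_equiv (joinEquiv M M) ?_ ?_).symm
    · intro pr
      simp [joinEquiv_apply, wt_join]
    · intro pr _
      rw [joinEquiv_apply, Pq_join]
  rw [htrans]
  have hset : univ.filter
        (fun pr : (Fin M → Bool) × (Fin M → Bool) => (wt pr.1 + wt pr.2) % 2 = 1)
      = ((univ.filter fun f : Fin M → Bool => wt f % 2 = 0)
            ×ˢ (univ.filter fun g : Fin M → Bool => wt g % 2 = 1))
        ∪ ((univ.filter fun f : Fin M → Bool => wt f % 2 = 1)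
            ×ˢ (univ.filter fun g : Fin M → Bool => wt g % 2 = 0)) := by
    ext pr
    simp only [Finset.mem_filter, Finset.mem_product, Finset.mem_union, Finset.mem_univ,
      true_and]
    omega
  have hdisj : Disjoint
      ((univ.filter fun f : Fin M → Bool => wt f % 2 = 0)
          ×ˢ (univ.filter fun g : Fin M → Bool => wt g % 2 = 1))
      ((univ.filter fun f : Fin M → Bool => wt f % 2 = 1)
          ×ˢ (univ.filter fun g : Fin M → Bool => wt g % 2 = 0)) := by
    refine Finset.disjoint_left.mpr fun pr h1 h2 => ?_
    simp only [Finset.mem_product, Finset.mem_filter] at h1 h2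
    omega
  rw [hset, Finset.sum_union hdisj, Finset.sum_product, Finset.sum_product,
    double_sum_eq q hq0 hq1, double_sum_eq q hq0 hq1]


lemma T1_eq' (q : ℝ) (hq0 : 0 < q) (hq1 : q < 1) (n M : ℕ) (h : n = M + M) :
    ∑ e ∈ univ.filter (fun e : Fin n → Bool => wt e % 2 = 1),
        Pq q e * Real.logb 2 (Pq q e)
      = ((∑ f ∈ univ.filter (fun f : Fin M → Bool => wt f % 2 = 0),
            Pq q f * Real.logb 2 (Pq q f))
          * (∑ g ∈ univ.filter (fun g : Fin M → Bool => wt g % 2 = 1), Pq q g)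
        + (∑ f ∈ univ.filter (fun f : Fin M → Bool => wt f % 2 = 0), Pq q f)
          * (∑ g ∈ univ.filter (fun g : Fin M → Bool => wt g % 2 = 1),
              Pq q g * Real.logb 2 (Pq q g)))
      + ((∑ f ∈ univ.filter (fun f : Fin M → Bool => wt f % 2 = 1),
            Pq q f * Real.logb 2 (Pq q f))
          * (∑ g ∈ univ.filter (fun g : Fin M → Bool => wt g % 2 = 0), Pq q g)
        + (∑ f ∈ univ.filter (fun f : Fin M → Bool => wt f % 2 = 1), Pq q f)
          * (∑ g ∈ univ.filter (fun g : Fin M → Bool => wt g % 2 = 0),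
              Pq q g * Real.logb 2 (Pq q g))) := by
  subst h
  exact T1_eq q hq0 hq1 M







lemma pbar_pos {q : ℝ} (hq0 : 0 < q) (hq1 : q < 1) (j : ℕ) :
    0 < pbar q j ∧ pbar q j < 1 := by
  have habs : |1 - 2*q| < 1 := abs_lt.mpr ⟨by linarith, by linarith⟩
  have h2 : |(1 - 2*q) ^ (2^j)| < 1 := by
    rw [abs_pow]
    calc |1-2*q| ^ (2^j) ≤ |1-2*q| ^ 1 :=
          pow_le_pow_of_le_one (abs_nonneg _) (le_of_lt habs) (Nat.one_le_two_pow)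
      _ < 1 := by rwa [pow_one]
  have := abs_lt.mp h2
  unfold pbar
  constructor <;> [linarith [this.2]; linarith [this.1]]

lemma pbar_succ (q : ℝ) (k : ℕ) : pbar q (k+1) = 2 * pbar q k * (1 - pbar q k) := by
  unfold pbar
  rw [pow_succ 2 k, pow_mul]
  ring

theorem Hcond_odd_recursion (q : ℝ) (hq0 : 0 < q) (hq1 : q < 1) (j : ℕ) (hj : 1 ≤ j) :
    Hcond q j 1 = 1 + Hcond q (j - 1) 0 + Hcond q (j - 1) 1 := by
  obtain ⟨k, rfl⟩ : ∃ k, j = k + 1 := ⟨j - 1, by omega⟩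
  simp only [Nat.add_sub_cancel]
  have hp := pbar_pos hq0 hq1 k
  obtain ⟨hp0, hp1⟩ := hp
  have hPpos : (0:ℝ) < 2 * pbar q k * (1 - pbar q k) := by
    have : (0:ℝ) < 1 - pbar q k := by linarith
    positivity
  have hPib0 : Pib q k 0 = 1 - pbar q k := by simp [Pib]
  have hPib1 : Pib q k 1 = pbar q k := by simp [Pib]
  have hPibS : Pib q (k+1) 1 = 2 * pbar q k * (1 - pbar q k) := by
    simp [Pib, pbar_succ]
  have hM : 2 ^ (k + 1) = 2 ^ k + 2 ^ k := by rw [pow_succ, mul_two]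
  simp only [Hcond, hPib0, hPib1, hPibS]
  rw [sum_div_logb _ _ (fun e _ => Pq_pos hq0 hq1 e) _ hPpos,
      sum_div_logb _ _ (fun e _ => Pq_pos hq0 hq1 e) _ (by linarith : (0:ℝ) < 1 - pbar q k),
      sum_div_logb _ _ (fun e _ => Pq_pos hq0 hq1 e) _ hp0]
  have hA1 : ∑ g ∈ univ.filter (fun g : Fin (2^k) → Bool => wt g % 2 = 1), Pq q g
      = pbar q k := by rw [sum_Pq_odd]; rfl
  have hA0 : ∑ g ∈ univ.filter (fun g : Fin (2^k) → Bool => wt g % 2 = 0), Pq q g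
      = 1 - pbar q k := by rw [sum_Pq_even]; unfold pbar; ring
  have hAodd : ∑ e ∈ univ.filter (fun e : Fin (2^(k+1)) → Bool => wt e % 2 = 1), Pq q e
      = 2 * pbar q k * (1 - pbar q k) := by
    rw [sum_Pq_odd, show (1 - (1-2*q)^(2^(k+1)))/2 = pbar q (k+1) from rfl, pbar_succ]
  rw [T1_eq' q hq0 hq1 (2^(k+1)) (2^k) hM, hA0, hA1, hAodd]
  have hlog : Real.logb 2 (2 * pbar q k * (1 - pbar q k))
      = 1 + Real.logb 2 (pbar q k) + Real.logb 2 (1 - pbar q k) := by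
    rw [Real.logb_mul (by positivity) (ne_of_gt (by linarith : (0:ℝ) < 1 - pbar q k))]
    rw [Real.logb_mul (by norm_num) (ne_of_gt hp0)]
    rw [Real.logb_self_eq_one (by norm_num)]
  rw [hlog]
  set U0 := ∑ f ∈ univ.filter (fun f : Fin (2^k) → Bool => wt f % 2 = 0),
      Pq q f * Real.logb 2 (Pq q f) with hU0
  set U1 := ∑ f ∈ univ.filter (fun f : Fin (2^k) → Bool => wt f % 2 = 1),
      Pq q f * Real.logb 2 (Pq q f) with hU1
  have h1p : (1:ℝ) - pbar q k ≠ 0 := by linarith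
  have hpne : pbar q k ≠ 0 := ne_of_gt hp0
  field_simp
  ring
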